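/- There is an absolute constant c with the following property. Suppose v is a real-valued function on the unit circle T with v, e^v ∈ L¹(T), and for some z in the open unit disk D let γ ≥ 0 be defined by P(e^v, z)/e^{P(v, z)} = 1 + γ. Then P(|v − P(v, z)|, z) ≤ c√γ if γ < 1, and P(|v − P(v, z)|, z) ≤ c log(1 + γ) if γ ≥ 1. -/

import Mathlib

open MeasureTheory Metric Filter Topology Set
open scoped Real ENNReal Topology

noncomputable section

/-- Normalized arc-length (Lebesgue) measure on the unit circle `{|z| = 1} ⊆ ℂ`,
normalized so that the total mass is `1`. -/
def mT : Measure ℂ :=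
  (ENNReal.ofReal (2 * Real.pi))⁻¹ •
    (volume.restrict (Set.Ioc (-Real.pi) Real.pi)).map
      (fun t : ℝ => Complex.exp ((t : ℂ) * Complex.I))

/-- Poisson extension of a (finite) measure on the unit circle:
`P(ν, z) = ∫ (1 - |z|²)/|1 - ξ̄ z|² dν(ξ)`. -/
def poissonM (ν : Measure ℂ) (z : ℂ) : ℝ :=
  ∫ ξ, (1 - ‖z‖ ^ 2) / ‖1 - (starRingEnd ℂ) ξ * z‖ ^ 2 ∂ν

/-- Poisson extension of a real-valued function on the unit circle. -/
def poissonF (v : ℂ → ℝ) (z : ℂ) : ℝ :=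
  ∫ ξ, v ξ * ((1 - ‖z‖ ^ 2) / ‖1 - (starRingEnd ℂ) ξ * z‖ ^ 2) ∂mT

/-- Poisson extension of a complex-valued function on the unit circle. -/
def poissonFC (v : ℂ → ℂ) (z : ℂ) : ℂ :=
  ∫ ξ, v ξ * (((1 - ‖z‖ ^ 2) / ‖1 - (starRingEnd ℂ) ξ * z‖ ^ 2 : ℝ) : ℂ) ∂mT

/-- The entropy function `K(ν, z) = log P(ν, z) - P(log w, z)`, where `w = dν/dm`. -/
def entropyM (ν : Measure ℂ) (z : ℂ) : ℝ :=
  Real.log (poissonM ν z) -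
    poissonF (fun ξ => Real.log ((ν.rnDeriv mT ξ).toReal)) z

/-- The entropy function of a weight: `K(v dm, z) = log P(v, z) - P(log v, z)`. -/
def entropyF (v : ℂ → ℝ) (z : ℂ) : ℝ :=
  Real.log (poissonF v z) - poissonF (fun ξ => Real.log (v ξ)) z

/-- A probability measure on the unit circle belongs to the Szegő class if
`log w ∈ L¹(T)` where `w` is the density of its absolutely continuous part. -/
def SzegoClass (μ : Measure ℂ) : Prop :=
  IsProbabilityMeasure μ ∧ μ (Metric.sphere (0 : ℂ) 1)ᶜ = 0 ∧
    Integrable (fun ξ => Real.log ((μ.rnDeriv mT ξ).toReal)) mT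

/-- `f` is the Schur function of the measure `μ`: it is an analytic contraction on the
open unit disk such that `(1 + z f(z))/(1 - z f(z)) = ∫ (1 + ξ̄ z)/(1 - ξ̄ z) dμ(ξ)`. -/
def IsSchurFunction (μ : Measure ℂ) (f : ℂ → ℂ) : Prop :=
  DifferentiableOn ℂ f (ball (0 : ℂ) 1) ∧
  (∀ z ∈ ball (0 : ℂ) 1, ‖f z‖ ≤ 1) ∧
  ∀ z ∈ ball (0 : ℂ) 1,
    (1 + z * f z) / (1 - z * f z)
      = ∫ ξ, (1 + (starRingEnd ℂ) ξ * z) / (1 - (starRingEnd ℂ) ξ * z) ∂μ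

/-- `f : ℕ → ℂ → ℂ` is the family of Schur iterates of `μ`: `f 0` is the Schur function
of `μ` and `z f_{n+1}(z) = (f_n(z) - f_n(0))/(1 - conj (f_n(0)) f_n(z))`. -/
def IsSchurFamily (μ : Measure ℂ) (f : ℕ → ℂ → ℂ) : Prop :=
  IsSchurFunction μ (f 0) ∧
  ∀ n : ℕ, DifferentiableOn ℂ (f (n + 1)) (ball (0 : ℂ) 1) ∧
    (∀ z ∈ ball (0 : ℂ) 1, ‖f (n + 1) z‖ ≤ 1) ∧
    ∀ z ∈ ball (0 : ℂ) 1,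
      z * f (n + 1) z = (f n z - f n 0) / (1 - (starRingEnd ℂ) (f n 0) * f n z)

/-- `φ` is the family of orthonormal polynomials of `μ`: `deg φ_n = n`, the leading
coefficient is (real and) positive, and `(φ_n, φ_k)_{L²(μ)} = δ_{n,k}`. -/
def OrthonormalPolys (μ : Measure ℂ) (φ : ℕ → Polynomial ℂ) : Prop :=
  (∀ n : ℕ, (φ n).natDegree = n) ∧
  (∀ n : ℕ, ∃ r : ℝ, 0 < r ∧ (φ n).leadingCoeff = (r : ℂ)) ∧
  (∀ n k : ℕ, ∫ ξ, (φ n).eval ξ * (starRingEnd ℂ) ((φ k).eval ξ) ∂μ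
      = if n = k then 1 else 0)

/-- The reversed polynomial `φ*(z) = z^n conj(φ(1/z̄))`, i.e. the degree-`n` reflection
with conjugated coefficients. -/
def revStar (n : ℕ) (p : Polynomial ℂ) : Polynomial ℂ :=
  Polynomial.reflect n (p.map (starRingEnd ℂ))

/-- The Szegő function `D_μ(z) = exp ∫ log √w(ξ) (1 + ξ̄ z)/(1 - ξ̄ z) dm(ξ)`,
where `w = dμ/dm`. -/
def szegoD (μ : Measure ℂ) (z : ℂ) : ℂ :=
  Complex.exp (∫ ξ, (Real.log (Real.sqrt ((μ.rnDeriv mT ξ).toReal)) : ℂ) *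
    ((1 + (starRingEnd ℂ) ξ * z) / (1 - (starRingEnd ℂ) ξ * z)) ∂mT)

/-- The Stolz angle `S*_ρ(ξ)`: the convex hull of `ρ·D` and the point `ξ`. -/
def stolz (ρ : ℝ) (ξ : ℂ) : Set ℂ := convexHull ℝ (ball (0 : ℂ) ρ ∪ {ξ})

/-- `g` has nontangential limit `L` at the boundary point `ξ`:  `g(z) → L` as `z → ξ`
inside every Stolz angle `S*_ρ(ξ)`, `ρ ∈ (0,1)`. -/
def NontangentialLimitAt (g : ℂ → ℂ) (ξ L : ℂ) : Prop :=
  ∀ ρ ∈ Set.Ioo (0 : ℝ) 1, Tendsto g (𝓝[stolz ρ ξ \ {ξ}] ξ) (𝓝 L)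

lemma key_min (t : ℝ) : min (t^2) |t| ≤ 4 * (Real.exp t - 1 - t) := by
  rcases le_or_gt (-2) t with h | h
  · have h1 := Real.add_one_le_exp (t/2)
    have h2 : Real.exp (t/2) * Real.exp (t/2) = Real.exp t := by
      rw [← Real.exp_add]; ring_nf
    have h3 : (0:ℝ) ≤ 1 + t/2 := by linarith
    have h4 : min (t^2) |t| ≤ t^2 := min_le_left _ _
    nlinarith [mul_self_le_mul_self h3 (by linarith : 1 + t/2 ≤ Real.exp (t/2))]
  · have h4 : min (t^2) |t| ≤ |t| := min_le_right _ _
    have h5 : |t| = -t := abs_of_neg (by linarith)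
    have := Real.exp_pos t
    linarith

lemma key_eps {t ε : ℝ} (hε : 0 < ε) (hε1 : ε ≤ 1) :
    |t| ≤ ε + (4/ε) * (Real.exp t - 1 - t) := by
  have hE : 0 ≤ Real.exp t - 1 - t := by have := Real.add_one_le_exp t; linarith
  rcases le_or_gt |t| ε with h | h
  · have : 0 ≤ (4/ε) * (Real.exp t - 1 - t) := by positivity
    linarith
  · have hk := key_min t
    rcases le_or_gt |t| 1 with h1 | h1
    · have hm : min (t^2) |t| = t^2 := min_eq_left (by nlinarith [abs_nonneg t, sq_abs t])
      rw [hm] at hk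
      have h2 : |t| ≤ 4/ε * (Real.exp t - 1 - t) := by
        rw [div_mul_eq_mul_div, le_div_iff₀ hε]
        nlinarith [sq_abs t, abs_nonneg t]
      linarith
    · have hm : min (t^2) |t| = |t| := min_eq_right (by nlinarith [sq_abs t])
      rw [hm] at hk
      have h2 : |t| ≤ 4/ε * (Real.exp t - 1 - t) := by
        rw [div_mul_eq_mul_div, le_div_iff₀ hε]
        nlinarith [abs_nonneg t]
      linarith

lemma key_log {t lam : ℝ} (hl : 0 ≤ lam) :
    |t| ≤ 2*lam + 2 * Real.exp (-lam) * Real.exp t - t := by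
  rcases le_or_gt t 0 with h | h
  · have := Real.exp_pos (-lam); have := Real.exp_pos t
    rw [abs_of_nonpos h]; nlinarith
  · rw [abs_of_pos h]
    have h1 := Real.add_one_le_exp (t - lam)
    have h2 : Real.exp (t - lam) = Real.exp (-lam) * Real.exp t := by
      rw [← Real.exp_add]; ring_nf
    have := Real.exp_pos (t - lam)
    nlinarith

lemma abstract_korey {α : Type*} [MeasurableSpace α] {μ : Measure α} [IsProbabilityMeasure μ]
    {K u : α → ℝ} (hK0 : ∀ ξ, 0 ≤ K ξ) (hK1 : ∫ ξ, K ξ ∂μ = 1)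
    (hKi : Integrable K μ)
    (huK : Integrable (fun ξ => u ξ * K ξ) μ)
    (heuK : Integrable (fun ξ => Real.exp (u ξ) * K ξ) μ)
    (hu0 : ∫ ξ, u ξ * K ξ ∂μ = 0)
    {γ : ℝ} (hγ0 : 0 ≤ γ) (heu : ∫ ξ, Real.exp (u ξ) * K ξ ∂μ = 1 + γ) :
    ∫ ξ, |u ξ| * K ξ ∂μ ≤ 5 * (if γ < 1 then Real.sqrt γ else Real.log (1+γ)) := by
  have habs : 0 ≤ᵐ[μ] fun ξ => |u ξ| * K ξ :=
    Filter.Eventually.of_forall fun ξ => mul_nonneg (abs_nonneg _) (hK0 ξ)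
  split_ifs with hlt
  · -- case γ < 1
    have claim : ∀ ε : ℝ, 0 < ε → ε ≤ 1 → ∫ ξ, |u ξ| * K ξ ∂μ ≤ ε + (4/ε) * γ := by
      intro ε hε hε1
      have hgint : Integrable (fun ξ => ε * K ξ
          + (4/ε) * ((Real.exp (u ξ) - 1 - u ξ) * K ξ)) μ := by
        refine ((hKi.const_mul ε).add (Integrable.const_mul ?_ (4/ε)))
        have : (fun ξ => (Real.exp (u ξ) - 1 - u ξ) * K ξ)
            = fun ξ => Real.exp (u ξ) * K ξ - K ξ - u ξ * K ξ := by funext ξ; ring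
        rw [this]
        exact (heuK.sub hKi).sub huK
      have hle : (fun ξ => |u ξ| * K ξ) ≤ᵐ[μ] fun ξ => ε * K ξ
          + (4/ε) * ((Real.exp (u ξ) - 1 - u ξ) * K ξ) := by
        refine Filter.Eventually.of_forall fun ξ => ?_
        have := mul_le_mul_of_nonneg_right (key_eps hε hε1 (t := u ξ)) (hK0 ξ)
        calc |u ξ| * K ξ ≤ (ε + 4/ε * (Real.exp (u ξ) - 1 - u ξ)) * K ξ := this
          _ = ε * K ξ + (4/ε) * ((Real.exp (u ξ) - 1 - u ξ) * K ξ) := by ring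
      refine (integral_mono_of_nonneg habs hgint hle).trans ?_
      rw [integral_add (hKi.const_mul ε), integral_const_mul, integral_const_mul, hK1]
      · have : ∫ ξ, (Real.exp (u ξ) - 1 - u ξ) * K ξ ∂μ = γ := by
          have hrw : (fun ξ => (Real.exp (u ξ) - 1 - u ξ) * K ξ)
              = fun ξ => Real.exp (u ξ) * K ξ - K ξ - u ξ * K ξ := by funext ξ; ring
          have hsub : Integrable (fun ξ => Real.exp (u ξ) * K ξ - K ξ) μ := heuK.sub hKi
          rw [hrw, integral_sub hsub huK, integral_sub heuK hKi, heu, hK1, hu0]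
          ring
        rw [this, mul_one]
      · refine Integrable.const_mul ?_ (4/ε)
        have : (fun ξ => (Real.exp (u ξ) - 1 - u ξ) * K ξ)
            = fun ξ => Real.exp (u ξ) * K ξ - K ξ - u ξ * K ξ := by funext ξ; ring
        rw [this]
        exact (heuK.sub hKi).sub huK
    rcases eq_or_lt_of_le hγ0 with h0 | h0
    · -- γ = 0
      have h2 : ∫ ξ, |u ξ| * K ξ ∂μ ≤ 0 := by
        refine le_of_forall_pos_le_add fun ε hε => ?_
        have := claim (min ε 1) (lt_min hε one_pos) (min_le_right _ _)
        rw [← h0, mul_zero, add_zero] at this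
        exact this.trans (by simpa using (min_le_left ε 1))
      rw [← h0, Real.sqrt_zero, mul_zero]
      exact h2
    · have hs0 : 0 < Real.sqrt γ := Real.sqrt_pos.2 h0
      have hs1 : Real.sqrt γ ≤ 1 := by
        rw [show (1:ℝ) = Real.sqrt 1 by simp]
        exact Real.sqrt_le_sqrt hlt.le
      refine (claim _ hs0 hs1).trans ?_
      have : 4 / Real.sqrt γ * γ = 4 * Real.sqrt γ := by
        have hss := Real.mul_self_sqrt hγ0
        field_simp
        linear_combination (-1 : ℝ) * hss
      rw [this]; ring_nf
      exact le_refl _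
  · -- case γ ≥ 1
    push_neg at hlt
    set lam := Real.log (1 + γ) with hlam
    have hgpos : (0:ℝ) < 1 + γ := by linarith
    have hexplam : Real.exp lam = 1 + γ := Real.exp_log hgpos
    have hlam23 : 2/3 ≤ lam := by
      have h2 : Real.log 2 ≤ lam := by
        apply Real.log_le_log (by norm_num)
        linarith
      have := Real.log_two_gt_d9
      linarith
    have hgint : Integrable (fun ξ => (2*lam) * K ξ
        + (2*Real.exp (-lam)) * (Real.exp (u ξ) * K ξ) - u ξ * K ξ) μ :=
      ((hKi.const_mul _).add (heuK.const_mul _)).sub huK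
    have hle : (fun ξ => |u ξ| * K ξ) ≤ᵐ[μ] fun ξ => (2*lam) * K ξ
        + (2*Real.exp (-lam)) * (Real.exp (u ξ) * K ξ) - u ξ * K ξ := by
      refine Filter.Eventually.of_forall fun ξ => ?_
      have hl0 : (0:ℝ) ≤ lam := by linarith
      have := mul_le_mul_of_nonneg_right (key_log hl0 (t := u ξ)) (hK0 ξ)
      calc |u ξ| * K ξ
          ≤ (2*lam + 2 * Real.exp (-lam) * Real.exp (u ξ) - u ξ) * K ξ := this
        _ = (2*lam) * K ξ + (2*Real.exp (-lam)) * (Real.exp (u ξ) * K ξ) - u ξ * K ξ := by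
            ring
    refine (integral_mono_of_nonneg habs hgint hle).trans ?_
    have hadd : Integrable (fun ξ => (2*lam) * K ξ
        + (2*Real.exp (-lam)) * (Real.exp (u ξ) * K ξ)) μ :=
      (hKi.const_mul _).add (heuK.const_mul _)
    rw [integral_sub hadd huK,
      integral_add (hKi.const_mul _) (heuK.const_mul _),
      integral_const_mul, integral_const_mul, hK1, hu0, heu]
    have h9 : Real.exp (-lam) * (1 + γ) = 1 := by
      rw [Real.exp_neg, hexplam]
      field_simp
    nlinarith [h9]


lemma circleParam_measurable : Measurable (fun t : ℝ => Complex.exp ((t : ℂ) * Complex.I)) :=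
  (Complex.continuous_exp.comp (Complex.continuous_ofReal.mul continuous_const)).measurable

lemma two_pi_pos : (0:ℝ) < 2 * Real.pi := by positivity

lemma mT_prob : IsProbabilityMeasure mT := by
  constructor
  rw [mT, Measure.smul_apply, Measure.map_apply circleParam_measurable MeasurableSet.univ]
  simp only [Set.preimage_univ, Measure.restrict_apply MeasurableSet.univ, Set.univ_inter,
    Real.volume_Ioc, smul_eq_mul]
  rw [show Real.pi - -Real.pi = 2 * Real.pi by ring]
  exact ENNReal.inv_mul_cancel (by simp [Real.pi_pos]) ENNReal.ofReal_ne_top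

lemma mT_ae_abs : ∀ᵐ ξ ∂mT, ‖ξ‖ = 1 := by
  rw [mT]
  refine Measure.ae_smul_measure ?_ _
  rw [MeasureTheory.ae_map_iff circleParam_measurable.aemeasurable
    (isClosed_eq continuous_norm continuous_const).measurableSet]
  exact MeasureTheory.ae_of_all _ fun t => Complex.norm_exp_ofReal_mul_I t

lemma Ker_eq_re {ξ z : ℂ} (hξ : ‖ξ‖ = 1) :
    (1 - ‖z‖ ^ 2) / ‖1 - (starRingEnd ℂ) ξ * z‖ ^ 2
      = ((ξ + z) / (ξ - z)).re := by
  have hsq : ξ.re^2 + ξ.im^2 = 1 := by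
    have := Complex.sq_norm ξ
    rw [hξ, Complex.normSq_apply] at this
    nlinarith
  have habsz : ‖z‖ ^ 2 = z.re^2 + z.im^2 := by
    rw [Complex.sq_norm, Complex.normSq_apply]; ring
  have h1 : (starRingEnd ℂ) ξ * ξ = 1 := by
    rw [mul_comm, Complex.mul_conj]
    norm_cast
    rw [← Complex.sq_norm, hξ]; norm_num
  have h2 : 1 - (starRingEnd ℂ) ξ * z = (starRingEnd ℂ) ξ * (ξ - z) := by
    rw [mul_sub, h1]
  rw [h2, norm_mul, Complex.norm_conj, hξ, one_mul, Complex.div_re, ← add_div,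
    Complex.sq_norm]
  rw [Complex.sq_norm]
  congr 1
  simp only [Complex.add_re, Complex.add_im, Complex.sub_re, Complex.sub_im]
  nlinarith [Complex.normSq_apply z]

lemma circle_inv_integral {w : ℂ} (hw : ‖w‖ < 1) :
    ∫ t in (0:ℝ)..(2*Real.pi),
      Complex.exp ((t:ℂ)*Complex.I) * (Complex.exp ((t:ℂ)*Complex.I) - w)⁻¹
      = 2*Real.pi := by
  have hw' : w ∈ ball (0:ℂ) 1 := by simpa [mem_ball, Complex.dist_eq] using hw
  have h := circleIntegral.integral_sub_inv_of_mem_ball hw'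
  rw [circleIntegral] at h
  simp only [deriv_circleMap, circleMap, Complex.ofReal_one, one_mul, zero_add,
    smul_eq_mul] at h
  have h3 : ∫ t in (0:ℝ)..(2*Real.pi),
      Complex.exp ((t:ℂ)*Complex.I) * Complex.I * (Complex.exp ((t:ℂ)*Complex.I) - w)⁻¹
      = Complex.I * ∫ t in (0:ℝ)..(2*Real.pi),
        Complex.exp ((t:ℂ)*Complex.I) * (Complex.exp ((t:ℂ)*Complex.I) - w)⁻¹ := by
    rw [← intervalIntegral.integral_const_mul]
    apply intervalIntegral.integral_congr
    intro t _; ring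
  rw [h3] at h
  apply mul_left_cancel₀ Complex.I_ne_zero
  rw [h]; ring

lemma Ker_measurable (z : ℂ) :
    Measurable (fun ξ : ℂ => (1 - ‖z‖ ^ 2) /
      ‖1 - (starRingEnd ℂ) ξ * z‖ ^ 2) := by
  apply Measurable.div measurable_const
  exact ((continuous_norm.comp
    (continuous_const.sub (Complex.continuous_conj.mul continuous_const))).pow 2).measurable

lemma exp_ne (z : ℂ) (hz : ‖z‖ < 1) (t : ℝ) :
    Complex.exp ((t:ℂ)*Complex.I) - z ≠ 0 := by
  intro h
  rw [sub_eq_zero] at h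
  rw [← h, Complex.norm_exp_ofReal_mul_I] at hz
  exact lt_irrefl _ hz

lemma cont_quot {z : ℂ} (hz : ‖z‖ < 1) :
    Continuous (fun t : ℝ => (Complex.exp ((t:ℂ)*Complex.I) + z) /
      (Complex.exp ((t:ℂ)*Complex.I) - z)) := by
  have hc : Continuous (fun t : ℝ => Complex.exp ((t:ℂ)*Complex.I)) :=
    Complex.continuous_exp.comp (Complex.continuous_ofReal.mul continuous_const)
  exact (hc.add continuous_const).div (hc.sub continuous_const) (fun t => exp_ne z hz t)

lemma interval_quot {z : ℂ} (hz : ‖z‖ < 1) :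
    ∫ t in (0:ℝ)..(2*Real.pi), (Complex.exp ((t:ℂ)*Complex.I) + z) /
      (Complex.exp ((t:ℂ)*Complex.I) - z) = 2*Real.pi := by
  have heq : ∀ t : ℝ, (Complex.exp ((t:ℂ)*Complex.I) + z) /
      (Complex.exp ((t:ℂ)*Complex.I) - z)
      = 2 * (Complex.exp ((t:ℂ)*Complex.I) * (Complex.exp ((t:ℂ)*Complex.I) - z)⁻¹) - 1 := by
    intro t
    have h := exp_ne z hz t
    field_simp
    ring
  rw [intervalIntegral.integral_congr (g := fun t : ℝ =>
    2 * (Complex.exp ((t:ℂ)*Complex.I) * (Complex.exp ((t:ℂ)*Complex.I) - z)⁻¹) - 1)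
    (fun t _ => heq t)]
  have hc : Continuous (fun t : ℝ =>
      Complex.exp ((t:ℂ)*Complex.I) * (Complex.exp ((t:ℂ)*Complex.I) - z)⁻¹) := by
    have hce : Continuous (fun t : ℝ => Complex.exp ((t:ℂ)*Complex.I)) :=
      Complex.continuous_exp.comp (Complex.continuous_ofReal.mul continuous_const)
    exact hce.mul ((hce.sub continuous_const).inv₀ (fun t => exp_ne z hz t))
  rw [intervalIntegral.integral_sub (((hc.intervalIntegrable _ _).const_mul 2))
    (intervalIntegrable_const),
    intervalIntegral.integral_const_mul, circle_inv_integral hz,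
    intervalIntegral.integral_const]
  rw [Complex.real_smul]
  push_cast
  ring

lemma interval_Ker {z : ℂ} (hz : ‖z‖ < 1) :
    ∫ t in (0:ℝ)..(2*Real.pi), (1 - ‖z‖ ^ 2) /
      ‖1 - (starRingEnd ℂ) (Complex.exp ((t:ℂ)*Complex.I)) * z‖ ^ 2
      = 2*Real.pi := by
  rw [intervalIntegral.integral_congr (g := fun t : ℝ =>
      ((Complex.exp ((t:ℂ)*Complex.I) + z) / (Complex.exp ((t:ℂ)*Complex.I) - z)).re)
    (fun t _ => Ker_eq_re (Complex.norm_exp_ofReal_mul_I t))]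
  rw [intervalIntegral.integral_of_le (by positivity : (0:ℝ) ≤ 2*Real.pi)]
  simp only [← RCLike.re_to_complex]
  rw [integral_re ((cont_quot hz).integrableOn_Ioc)]
  rw [← intervalIntegral.integral_of_le (by positivity : (0:ℝ) ≤ 2*Real.pi)]
  rw [interval_quot hz]
  simp

lemma exp_periodic' : ∀ t : ℝ, Complex.exp ((((t+2*Real.pi):ℝ):ℂ)*Complex.I)
    = Complex.exp ((t:ℂ)*Complex.I) := by
  intro t
  push_cast
  rw [add_mul, Complex.exp_add, Complex.exp_two_pi_mul_I, mul_one]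

lemma integral_Ker {z : ℂ} (hz : ‖z‖ < 1) :
    ∫ ξ, (1 - ‖z‖ ^ 2) / ‖1 - (starRingEnd ℂ) ξ * z‖ ^ 2 ∂mT = 1 := by
  rw [mT, integral_smul_measure,
    integral_map circleParam_measurable.aemeasurable (Ker_measurable z).aestronglyMeasurable,
    ENNReal.toReal_inv, ENNReal.toReal_ofReal two_pi_pos.le,
    ← intervalIntegral.integral_of_le (by linarith [Real.pi_pos] : -Real.pi ≤ Real.pi)]
  have hper : Function.Periodic (fun t : ℝ => (1 - ‖z‖ ^ 2) /
      ‖1 - (starRingEnd ℂ) (Complex.exp ((t:ℂ)*Complex.I)) * z‖ ^ 2)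
      (2*Real.pi) := by
    intro t
    simp only [exp_periodic' t]
  have hshift := hper.intervalIntegral_add_eq (-Real.pi) 0
  rw [show -Real.pi + 2*Real.pi = Real.pi by ring, zero_add] at hshift
  rw [hshift, interval_Ker hz, smul_eq_mul, inv_mul_cancel₀ two_pi_pos.ne']

/-- Korey-type estimate, Lemma 3.1 of the paper.  There is an absolute
constant `c` such that: if `v, e^v ∈ L¹(T)` and `P(e^v, z)/e^{P(v,z)} = 1 + γ` with `γ ≥ 0`
for some `z ∈ D`, then `P(|v - P(v,z)|, z) ≤ c √γ` when `γ < 1` and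
`P(|v - P(v,z)|, z) ≤ c log(1 + γ)` when `γ ≥ 1`. -/
theorem statement11 :
    ∃ c : ℝ, 0 < c ∧
      ∀ (v : ℂ → ℝ) (z : ℂ) (γ : ℝ),
        Integrable v mT → Integrable (fun ξ => Real.exp (v ξ)) mT →
        z ∈ ball (0 : ℂ) 1 → 0 ≤ γ →
        poissonF (fun ξ => Real.exp (v ξ)) z = (1 + γ) * Real.exp (poissonF v z) →
        poissonF (fun ξ => |v ξ - poissonF v z|) z
          ≤ c * (if γ < 1 then Real.sqrt γ else Real.log (1 + γ)) := by
  refine ⟨5, by norm_num, ?_⟩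
  intro v z γ hv he hz hγ0 hEq
  have hz' : ‖z‖ < 1 := by simpa [mem_ball, Complex.dist_eq] using hz
  haveI := mT_prob
  set p := poissonF v z with hp
  simp only [poissonF] at hEq ⊢
  set K : ℂ → ℝ := fun ξ =>
    (1 - ‖z‖ ^ 2) / ‖1 - (starRingEnd ℂ) ξ * z‖ ^ 2 with hKdef
  have hK0 : ∀ ξ, 0 ≤ K ξ := fun ξ =>
    div_nonneg (by nlinarith [norm_nonneg z]) (by positivity)
  have hKm : Measurable K := Ker_measurable z
  set M : ℝ := (1 - ‖z‖ ^ 2) / (1 - ‖z‖) ^ 2 with hM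
  have hKbd : ∀ᵐ ξ ∂mT, ‖K ξ‖ ≤ M := by
    filter_upwards [mT_ae_abs] with ξ hξ
    rw [Real.norm_eq_abs, abs_of_nonneg (hK0 ξ)]
    have hden : 1 - ‖z‖ ≤ ‖1 - (starRingEnd ℂ) ξ * z‖ := by
      have h1 := norm_sub_norm_le (1 : ℂ) ((starRingEnd ℂ) ξ * z)
      rw [norm_one, norm_mul, Complex.norm_conj, hξ, one_mul] at h1
      exact h1
    have hpos : (0:ℝ) < (1 - ‖z‖) ^ 2 := pow_pos (by linarith) 2
    apply div_le_div_of_nonneg_left (by nlinarith [norm_nonneg z]) hpos ?_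
    exact pow_le_pow_left₀ (by linarith) hden 2
  have hKi : Integrable K mT :=
    Integrable.mono' (integrable_const M) hKm.aestronglyMeasurable hKbd
  have hmulK : ∀ {w : ℂ → ℝ}, Integrable w mT → Integrable (fun ξ => w ξ * K ξ) mT := by
    intro w hw
    refine Integrable.mono' ((hw.abs).const_mul M)
      (hw.aestronglyMeasurable.mul hKm.aestronglyMeasurable) ?_
    filter_upwards [hKbd] with ξ h
    rw [Real.norm_eq_abs, abs_mul]
    rw [Real.norm_eq_abs] at h
    calc |w ξ| * |K ξ| ≤ |w ξ| * M := mul_le_mul_of_nonneg_left h (abs_nonneg _)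
      _ = M * |w ξ| := mul_comm _ _
  have hK1 : ∫ ξ, K ξ ∂mT = 1 := integral_Ker hz'
  have hvK : Integrable (fun ξ => v ξ * K ξ) mT := hmulK hv
  have hpdef : ∫ ξ, v ξ * K ξ ∂mT = p := by rw [hp, poissonF]
  have huint : Integrable (fun ξ => v ξ - p) mT := hv.sub (integrable_const p)
  have huK : Integrable (fun ξ => (v ξ - p) * K ξ) mT := hmulK huint
  have heuint : Integrable (fun ξ => Real.exp (v ξ - p)) mT := by
    have hrw : (fun ξ => Real.exp (v ξ - p)) = fun ξ => Real.exp (-p) * Real.exp (v ξ) := by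
      funext ξ; rw [← Real.exp_add]; congr 1; ring
    rw [hrw]; exact he.const_mul _
  have heuK : Integrable (fun ξ => Real.exp (v ξ - p) * K ξ) mT := hmulK heuint
  have hu0 : ∫ ξ, (v ξ - p) * K ξ ∂mT = 0 := by
    have hrw : (fun ξ => (v ξ - p) * K ξ) = fun ξ => v ξ * K ξ - p * K ξ := by
      funext ξ; ring
    rw [hrw, integral_sub hvK (hKi.const_mul p), integral_const_mul, hK1, hpdef]
    ring
  have heu : ∫ ξ, Real.exp (v ξ - p) * K ξ ∂mT = 1 + γ := by
    have hrw : (fun ξ => Real.exp (v ξ - p) * K ξ)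
        = fun ξ => Real.exp (-p) * (Real.exp (v ξ) * K ξ) := by
      funext ξ
      have h2 : Real.exp (v ξ - p) = Real.exp (-p) * Real.exp (v ξ) := by
        rw [← Real.exp_add]; congr 1; ring
      rw [h2]; ring
    rw [hrw, integral_const_mul, hEq]
    have h1 : Real.exp (-p) * Real.exp p = 1 := by rw [← Real.exp_add]; simp
    calc Real.exp (-p) * ((1 + γ) * Real.exp p)
        = (1 + γ) * (Real.exp (-p) * Real.exp p) := by ring
      _ = 1 + γ := by rw [h1, mul_one]
  exact abstract_korey hK0 hK1 hKi huK heuK hu0 hγ0 heu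

end
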